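/- arXiv:2006.16495 — 3 statements merged into one kernel-verified Lean document; each statement's English description precedes it below -/
import Mathlib

section
/- Let F̂(η) = f(w_{t,η}) = ½ Σ_{i=1}^d c_i² λ_i (1 − ηλ_i)^{2t} be the train-by-train meta objective. For every step size η with 0 < η < 2/L one has |1 − ηλ_i| < 1 for all i and |F̂'(η)| ≤ t Σ_{i=1}^d c_i² λ_i² |1 − ηλ_i|^{2t−1}; and for every step size η > 2/L one has |F̂'(η)| ≥ c_1² L² t (ηL − 1)^{2t−1} − L² t. (Thus the meta-gradient is exponentially small in t below 2/L and exponentially large in t above 2/L.) -/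
/-- For the train-by-train meta objective
`F̂(η) = ½ Σᵢ cᵢ² λᵢ (1 − ηλᵢ)^{2t}`:  for `0 < η < 2/L` one has `|1 − ηλᵢ| < 1` for all `i` and
`|F̂'(η)| ≤ t Σᵢ cᵢ² λᵢ² |1 − ηλᵢ|^{2t−1}`; for `η > 2/L` one has
`|F̂'(η)| ≥ c₁² L² t (ηL − 1)^{2t−1} − L² t`. -/
theorem stmt1 (d t : ℕ) (hd : 2 ≤ d) (ht : 1 ≤ t)
    (lam c : Fin d → ℝ)
    (hpos : ∀ i, 0 < lam i)
    (hdec : ∀ i j : Fin d, i ≤ j → lam j ≤ lam i)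
    (L α : ℝ)
    (hLdef : L = lam ⟨0, by omega⟩)
    (hadef : α = lam ⟨d - 1, by omega⟩)
    (hgap : α < L)
    (hcnorm : ∑ i, c i ^ 2 = 1)
    (cmin : ℝ)
    (hcmindef : cmin = min |c ⟨0, by omega⟩| |c ⟨d - 1, by omega⟩|)
    (hcmin : 0 < cmin)
    (F : ℝ → ℝ)
    (hF : ∀ η : ℝ, F η = (1 / 2) * ∑ i, c i ^ 2 * lam i * (1 - η * lam i) ^ (2 * t)) :
    (∀ η : ℝ, 0 < η → η < 2 / L →
        (∀ i, |1 - η * lam i| < 1) ∧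
        |deriv F η| ≤ (t : ℝ) * ∑ i, c i ^ 2 * lam i ^ 2 * |1 - η * lam i| ^ (2 * t - 1))
    ∧ (∀ η : ℝ, 2 / L < η →
        (c ⟨0, by omega⟩) ^ 2 * L ^ 2 * (t : ℝ) * (η * L - 1) ^ (2 * t - 1) - L ^ 2 * (t : ℝ)
          ≤ |deriv F η|) := by
  set i0 : Fin d := ⟨0, by omega⟩ with hi0
  have hLpos : 0 < L := hLdef ▸ hpos i0
  have hlamL : ∀ i, lam i ≤ L := by
    intro i
    rw [hLdef]
    exact hdec i0 i (by simp [hi0, Fin.le_def])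
  have hFe : F = fun η => (1 / 2) * ∑ i, c i ^ 2 * lam i * (1 - η * lam i) ^ (2 * t) :=
    funext hF
  have key : ∀ η : ℝ, deriv F η
      = -(t : ℝ) * ∑ i, c i ^ 2 * lam i ^ 2 * (1 - η * lam i) ^ (2 * t - 1) := by
    intro η
    have hd1 : HasDerivAt F
        ((1 / 2) * ∑ i, c i ^ 2 * lam i *
          (((2 * t : ℕ) : ℝ) * (1 - η * lam i) ^ (2 * t - 1) * (-lam i))) η := by
      rw [hFe]
      refine HasDerivAt.const_mul _ (HasDerivAt.fun_sum fun i _ => ?_)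
      refine HasDerivAt.const_mul _ ?_
      have h1 : HasDerivAt (fun η : ℝ => 1 - η * lam i) (-lam i) η := by
        simpa using (hasDerivAt_mul_const (lam i)).const_sub 1
      exact h1.pow (2 * t)
    rw [hd1.deriv, Finset.mul_sum, Finset.mul_sum]
    refine Finset.sum_congr rfl fun i _ => ?_
    push_cast
    ring
  constructor
  · intro η hη1 hη2
    have habs : ∀ i, |1 - η * lam i| < 1 := by
      intro i
      have h1 : 0 < η * lam i := mul_pos hη1 (hpos i)
      have h2 : η * lam i < 2 := by
        have := mul_lt_mul_of_pos_right hη2 (hpos i)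
        have h3 : 2 / L * lam i ≤ 2 := by
          rw [div_mul_eq_mul_div, div_le_iff₀ hLpos]
          nlinarith [hlamL i]
        calc η * lam i < 2 / L * lam i := this
          _ ≤ 2 := h3
      rw [abs_lt]; constructor <;> linarith
    refine ⟨habs, ?_⟩
    rw [key η, abs_mul, abs_neg, abs_of_nonneg (by positivity : (0:ℝ) ≤ (t:ℝ))]
    refine mul_le_mul_of_nonneg_left ?_ (by positivity)
    calc |∑ i, c i ^ 2 * lam i ^ 2 * (1 - η * lam i) ^ (2 * t - 1)|
        ≤ ∑ i, |c i ^ 2 * lam i ^ 2 * (1 - η * lam i) ^ (2 * t - 1)| :=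
          Finset.abs_sum_le_sum_abs _ _
      _ = ∑ i, c i ^ 2 * lam i ^ 2 * |1 - η * lam i| ^ (2 * t - 1) := by
          refine Finset.sum_congr rfl fun i _ => ?_
          rw [abs_mul, abs_pow, abs_mul, abs_of_nonneg (sq_nonneg (c i)),
            abs_of_nonneg (sq_nonneg (lam i))]
  · intro η hη
    have hηpos : 0 < η := lt_trans (by positivity) hη
    have hderiv_ge : (c i0) ^ 2 * L ^ 2 * (t : ℝ) * (η * L - 1) ^ (2 * t - 1)
        - L ^ 2 * (t : ℝ) ≤ deriv F η := by
      rw [key η]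
      have hsplit : ∑ i, c i ^ 2 * lam i ^ 2 * (1 - η * lam i) ^ (2 * t - 1)
          = c i0 ^ 2 * lam i0 ^ 2 * (1 - η * lam i0) ^ (2 * t - 1)
            + ∑ i ∈ Finset.univ.erase i0,
                c i ^ 2 * lam i ^ 2 * (1 - η * lam i) ^ (2 * t - 1) :=
        (Finset.add_sum_erase _ _ (Finset.mem_univ i0)).symm
      have hodd : Odd (2 * t - 1) := by
        refine ⟨t - 1, by omega⟩
      have hi0term : (1 - η * lam i0) ^ (2 * t - 1) = -((η * L - 1) ^ (2 * t - 1)) := by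
        rw [hLdef]
        rw [show (1 - η * lam i0) = -(η * lam i0 - 1) by ring, hodd.neg_pow]
      have hrest : ∑ i ∈ Finset.univ.erase i0,
          c i ^ 2 * lam i ^ 2 * (1 - η * lam i) ^ (2 * t - 1) ≤ L ^ 2 := by
        calc ∑ i ∈ Finset.univ.erase i0, c i ^ 2 * lam i ^ 2 * (1 - η * lam i) ^ (2 * t - 1)
            ≤ ∑ i ∈ Finset.univ.erase i0, c i ^ 2 * L ^ 2 := by
              refine Finset.sum_le_sum fun i _ => ?_
              have hle1 : (1 - η * lam i) ^ (2 * t - 1) ≤ 1 := by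
                have hx : 1 - η * lam i < 1 := by
                  nlinarith [hpos i, mul_pos hηpos (hpos i)]
                rcases le_or_gt 0 (1 - η * lam i) with h | h
                · exact pow_le_one₀ h (by linarith)
                · exact le_trans (le_of_lt (hodd.pow_neg h)) zero_le_one
              have h2 : c i ^ 2 * lam i ^ 2 * (1 - η * lam i) ^ (2 * t - 1)
                  ≤ c i ^ 2 * lam i ^ 2 := mul_le_of_le_one_right (by positivity) hle1
              have h3 : lam i ^ 2 ≤ L ^ 2 := pow_le_pow_left₀ (hpos i).le (hlamL i) 2
              have h4 := mul_le_mul_of_nonneg_left h3 (sq_nonneg (c i))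
              linarith
          _ = L ^ 2 * ∑ i ∈ Finset.univ.erase i0, c i ^ 2 := by
              rw [Finset.mul_sum]; exact Finset.sum_congr rfl fun i _ => by ring
          _ ≤ L ^ 2 * 1 := by
              refine mul_le_mul_of_nonneg_left ?_ (by positivity)
              rw [← hcnorm]
              exact Finset.sum_le_sum_of_subset_of_nonneg (Finset.subset_univ _)
                (fun i _ _ => sq_nonneg _)
          _ = L ^ 2 := mul_one _
      rw [hsplit, hi0term, show lam i0 = L from hLdef.symm]
      have htnn : (0:ℝ) ≤ (t:ℝ) := by positivity
      linarith [mul_le_mul_of_nonneg_left hrest htnn]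
    calc _ ≤ deriv F η := hderiv_ge
      _ ≤ |deriv F η| := le_abs_self _
end

section
/- For every η > 0 at which N(η) ≥ 16Lσ², the derivative satisfies N'(η) ≥ 0. Consequently, if N(η) ≥ 16Lσ² for some η > 0, then N(η') ≥ 16Lσ² for every η' ≥ η; that is, once the norm of the t-th gradient-descent iterate reaches the threshold 4√L σ at some step size, it remains at or above this threshold for all larger step sizes. -/
lemma stmt13_key (t : ℕ) (ht : 2 ≤ t) (hteven : Even t) (u : ℝ) (hu : u < 1) :
    (1 - u ^ t) ^ 2 - 4 ≤ (1 - u) * (1 - u ^ t) * u ^ (t - 1) := by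
  have ht1 : t - 1 + 1 = t := by omega
  have hodd : Odd (t - 1) := Nat.Even.sub_odd (by omega) hteven odd_one
  rcases le_or_gt (-1) u with h | h
  · have habs : |u| ≤ 1 := abs_le.mpr ⟨h, hu.le⟩
    have h0 : 0 ≤ u ^ t := hteven.pow_nonneg u
    have hle : u ^ t ≤ 1 := by
      have := pow_le_one₀ (abs_nonneg u) habs (n := t)
      rwa [pow_abs, abs_of_nonneg h0] at this
    have h1 : |u ^ (t-1)| ≤ 1 := by
      rw [abs_pow]; exact pow_le_one₀ (abs_nonneg u) habs
    rw [abs_le] at h1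
    have hP : 0 ≤ (1-u)*(1-u^t) := mul_nonneg (by linarith) (by linarith)
    have hP2 : (1-u)*(1-u^t) ≤ 2 := by nlinarith
    have hR : -((1-u)*(1-u^t)) ≤ (1-u)*(1-u^t)*u^(t-1) := by
      nlinarith [mul_le_mul_of_nonneg_left h1.1 hP]
    have hsq : (1-u^t)^2 ≤ 1 := by nlinarith
    linarith
  · set v : ℝ := -u with hv
    have hv1 : 1 < v := by simp only [hv]; linarith
    have hut : u ^ t = v ^ t := by rw [hv, hteven.neg_pow]
    have hut1 : u ^ (t-1) = -v ^ (t-1) := by rw [hv, hodd.neg_pow, neg_neg]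
    have ha : 1 ≤ v ^ t := one_le_pow₀ hv1.le
    have hb : 1 ≤ v ^ (t-1) := one_le_pow₀ hv1.le
    have hsplit : v ^ t = v * v ^ (t-1) := by conv_lhs => rw [← ht1, pow_succ']
    have hu' : u = -v := by rw [hv]; ring
    rw [hut, hut1, hu']
    nlinarith [mul_nonneg (show (0:ℝ) ≤ v^t - 1 by linarith)
        (show (0:ℝ) ≤ v^(t-1) by linarith), hsplit, ha, hb, hv1]



/-- Let `t ≥ 2` be even, `λᵢ > 0`, `Σᵢ cᵢ² ≤ 4Lσ²`, and let
`N(η) = Σᵢ (1 − (1 − ηλᵢ)^t)² cᵢ²` be the squared norm of the `t`-th (untruncated) GD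
iterate.  Then at every `η > 0` with `N(η) ≥ 16Lσ²` the derivative satisfies `N'(η) ≥ 0`;
consequently, if `N(η) ≥ 16Lσ²` for some `η > 0` then `N(η') ≥ 16Lσ²` for every
`η' ≥ η`. -/
theorem stmt13 (d t : ℕ) (ht : 2 ≤ t) (hteven : Even t)
    (lam c : Fin d → ℝ) (hlam : ∀ i, 0 < lam i)
    (σ L : ℝ) (hσ : 0 < σ) (hL : 0 < L)
    (hc : ∑ i, c i ^ 2 ≤ 4 * L * σ ^ 2)
    (N : ℝ → ℝ)
    (hN : ∀ η : ℝ, N η = ∑ i, (1 - (1 - η * lam i) ^ t) ^ 2 * c i ^ 2) :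
    (∀ η : ℝ, 0 < η → 16 * L * σ ^ 2 ≤ N η → 0 ≤ deriv N η) ∧
    (∀ η : ℝ, 0 < η → 16 * L * σ ^ 2 ≤ N η →
      ∀ η' : ℝ, η ≤ η' → 16 * L * σ ^ 2 ≤ N η') := by
  have hNfun : N = fun η => ∑ i, (1 - (1 - η * lam i) ^ t) ^ 2 * c i ^ 2 := funext hN
  subst hNfun
  set N : ℝ → ℝ := fun η => ∑ i, (1 - (1 - η * lam i) ^ t) ^ 2 * c i ^ 2 with hNdef
  -- derivative
  set D : ℝ → ℝ := fun x => ∑ i,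
      2 * (1 - (1 - x * lam i) ^ t) ^ 1 * -(↑t * (1 - x * lam i) ^ (t - 1) * -lam i) * c i ^ 2
    with hDdef
  have hD : ∀ x : ℝ, HasDerivAt N (D x) x := by
    intro x
    apply HasDerivAt.fun_sum
    intro i _
    have h1 : HasDerivAt (fun y : ℝ => 1 - y * lam i) (-lam i) x := by
      simpa using (hasDerivAt_mul_const (lam i) (x := x)).const_sub 1
    have h2 := (h1.fun_pow t).const_sub 1
    have h3 := (h2.fun_pow 2).mul_const (c i ^ 2)
    convert h3 using 1
    · rfl
    · norm_num
  -- key differential inequality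
  have hkey : ∀ x : ℝ, 0 < x → 2 * (t:ℝ) * (N x - 16 * L * σ ^ 2) ≤ x * D x := by
    intro x hx
    have hstep : ∀ i : Fin d,
        2 * (t:ℝ) * ((1 - (1 - x * lam i) ^ t) ^ 2 * c i ^ 2 - 4 * c i ^ 2) ≤
        x * (2 * (1 - (1 - x * lam i) ^ t) ^ 1 * -(↑t * (1 - x * lam i) ^ (t - 1) * -lam i)
             * c i ^ 2) := by
      intro i
      set u : ℝ := 1 - x * lam i with hu
      have hu1 : u < 1 := by
        have := mul_pos hx (hlam i); simp only [hu]; linarith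
      have hk := stmt13_key t ht hteven u hu1
      have hxl : x * lam i = 1 - u := by rw [hu]; ring
      have h2 : 2 * (t:ℝ) * c i ^ 2 * ((1 - u ^ t) ^ 2 - 4) ≤
          2 * (t:ℝ) * c i ^ 2 * ((1 - u) * (1 - u ^ t) * u ^ (t - 1)) :=
        mul_le_mul_of_nonneg_left hk (by positivity)
      calc 2 * (t:ℝ) * ((1 - u ^ t) ^ 2 * c i ^ 2 - 4 * c i ^ 2)
          = 2 * (t:ℝ) * c i ^ 2 * ((1 - u ^ t) ^ 2 - 4) := by ring
        _ ≤ 2 * (t:ℝ) * c i ^ 2 * ((1 - u) * (1 - u ^ t) * u ^ (t - 1)) := h2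
        _ = x * (2 * (1 - u ^ t) ^ 1 * -(↑t * u ^ (t - 1) * -lam i) * c i ^ 2) := by
            rw [show (1:ℝ) - u = x * lam i by rw [hu]; ring]; ring
    have hsum := Finset.sum_le_sum (s := Finset.univ) (fun i _ => hstep i)
    have e1 : ∑ i, 2 * (t:ℝ) * ((1 - (1 - x * lam i) ^ t) ^ 2 * c i ^ 2 - 4 * c i ^ 2)
        = 2 * (t:ℝ) * (N x) - 2 * (t:ℝ) * 4 * (∑ i, c i ^ 2) := by
      simp only [hNdef]
      rw [Finset.mul_sum, Finset.mul_sum, ← Finset.sum_sub_distrib]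
      exact Finset.sum_congr rfl fun i _ => by ring
    have e2 : ∑ i, x * (2 * (1 - (1 - x * lam i) ^ t) ^ 1
        * -(↑t * (1 - x * lam i) ^ (t - 1) * -lam i) * c i ^ 2) = x * D x := by
      rw [hDdef, Finset.mul_sum]
    rw [e1, e2] at hsum
    have htpos : (0:ℝ) ≤ 2 * (t:ℝ) := by positivity
    nlinarith [hsum, hc, htpos]
  constructor
  · intro η hη hth
    rw [(hD η).deriv]
    by_contra hneg
    push_neg at hneg
    have h1 : 0 ≤ 2 * (t:ℝ) * (N η - 16 * L * σ ^ 2) := by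
      have : (0:ℝ) ≤ 2 * (t:ℝ) := by positivity
      exact mul_nonneg this (by linarith)
    have h2 := hkey η hη
    nlinarith [mul_neg_of_pos_of_neg hη hneg]
  · intro η hη hth η' hle
    set K : ℝ := 16 * L * σ ^ 2 with hK
    set G : ℝ → ℝ := fun x => (N x - K) / x ^ (2 * t) with hG
    have hNdiff : Differentiable ℝ N := fun x => (hD x).differentiableAt
    have hGder : ∀ x : ℝ, 0 < x → HasDerivAt G
        ((D x * x ^ (2*t) - (N x - K) * (↑(2*t) * x ^ (2*t - 1))) / (x ^ (2*t)) ^ 2) x := by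
      intro x hx
      exact ((hD x).sub_const K).div (hasDerivAt_pow (2*t) x) (pow_ne_zero _ hx.ne')
    have hGderiv_nonneg : ∀ x : ℝ, 0 < x → 0 ≤ deriv G x := by
      intro x hx
      rw [(hGder x hx).deriv]
      apply div_nonneg _ (sq_nonneg _)
      have hp : x ^ (2*t) = x ^ (2*t - 1) * x := by
        conv_lhs => rw [show 2*t = (2*t - 1) + 1 by omega, pow_succ]
      have hk2 := hkey x hx
      have hppos : (0:ℝ) < x ^ (2*t - 1) := pow_pos hx _
      have := mul_le_mul_of_nonneg_left hk2 hppos.le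
      rw [hp]
      push_cast
      nlinarith [this]
    have hmono : MonotoneOn G (Set.Ici η) := by
      apply monotoneOn_of_deriv_nonneg (convex_Ici η)
      · apply ContinuousOn.div (hNdiff.continuous.sub continuous_const).continuousOn
          (continuous_pow (2*t)).continuousOn
        intro x hx
        exact pow_ne_zero _ (lt_of_lt_of_le hη hx).ne'
      · intro x hx
        rw [interior_Ici] at hx
        exact ((hGder x (lt_trans hη hx)).differentiableAt).differentiableWithinAt
      · intro x hx
        rw [interior_Ici] at hx
        exact hGderiv_nonneg x (lt_trans hη hx)
    have h1 : G η ≤ G η' := hmono (Set.self_mem_Ici) hle hle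
    have hGη : 0 ≤ G η := div_nonneg (by linarith) (by positivity)
    have hGη' : 0 ≤ G η' := le_trans hGη h1
    have hη' : 0 < η' := lt_of_lt_of_le hη hle
    have hpp : (0:ℝ) < η' ^ (2*t) := pow_pos hη' _
    have : 0 ≤ (N η' - K) := by
      have := mul_nonneg hGη' hpp.le
      rwa [hG, div_mul_cancel₀ _ hpp.ne'] at this
    linarith
end

section
/- Let i be an index drawn uniformly at random from {1, …, n}. Assume L ≥ 1, ‖x_i‖² ≤ Ld for every i, vᵀ H v ≥ (1/L)‖v‖², and ‖H v‖ ≤ L‖v‖. Then for every step size η with 0 ≤ η ≤ 1/(2L³d), one stochastic-gradient step contracts in expectation: E_i‖(I − η x_i x_iᵀ) v‖² ≤ (1 − η/(2L)) ‖v‖². -/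
/-- Squared Euclidean norm. -/
def sqnorm {k : ℕ} (v : Fin k → ℝ) : ℝ := ∑ i, (v i) ^ 2

/-- Euclidean inner product. -/
def dot {k : ℕ} (u v : Fin k → ℝ) : ℝ := ∑ i, u i * v i

lemma expand_aux {d : ℕ} (η c : ℝ) (w u : Fin d → ℝ) :
    sqnorm (fun j => w j - η * (c * u j)) =
      sqnorm w - 2*η*c*(∑ j, u j * w j) + η^2*c^2*sqnorm u := by
  have h : ∀ j, (w j - η*(c*u j))^2
      = w j^2 - (2*η*c)*(u j*w j) + (η^2*c^2)*(u j^2) := by intro j; ring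
  simp only [sqnorm, h, Finset.sum_add_distrib, Finset.sum_sub_distrib, ← Finset.mul_sum]

/-- For data `x₁, …, xₙ ∈ ℝ^d`, `H = (1/n)Σᵢ xᵢxᵢᵀ`, `v ∈ ℝ^d`, with
`L ≥ 1`, `‖xᵢ‖² ≤ Ld`, `vᵀHv ≥ (1/L)‖v‖²`, `‖Hv‖ ≤ L‖v‖`, and `i` uniform on
`{1, …, n}`: for every step size `0 ≤ η ≤ 1/(2L³d)`, one SGD step contracts in
expectation, `E_i ‖(I − η xᵢxᵢᵀ) v‖² ≤ (1 − η/(2L)) ‖v‖²`. -/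
theorem stmt19 (d n : ℕ) (hd : 1 ≤ d) (hn : 1 ≤ n)
    (x : Fin n → Fin d → ℝ) (v : Fin d → ℝ)
    (L : ℝ) (hL : 1 ≤ L)
    (Hv : Fin d → ℝ)
    (hHv : Hv = fun j => (1 / (n : ℝ)) * ∑ i, dot (x i) v * x i j)
    (hx : ∀ i, sqnorm (x i) ≤ L * (d : ℝ))
    (hlow : (1 / L) * sqnorm v ≤ dot v Hv)
    (hhigh : Real.sqrt (sqnorm Hv) ≤ L * Real.sqrt (sqnorm v)) :
    ∀ η : ℝ, 0 ≤ η → η ≤ 1 / (2 * L ^ 3 * (d : ℝ)) →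
      (1 / (n : ℝ)) * ∑ i, sqnorm (fun j => v j - η * (dot (x i) v * x i j)) ≤
        (1 - η / (2 * L)) * sqnorm v := by
  intro η hη hη2
  have hn0 : (0:ℝ) < n := by exact_mod_cast hn
  have hd0 : (1:ℝ) ≤ d := by exact_mod_cast hd
  have hL0 : (0:ℝ) < L := by linarith
  set S := ∑ i, (dot (x i) v)^2 with hS
  set T := ∑ i, (dot (x i) v)^2 * sqnorm (x i) with hT
  -- dot v Hv = S / n
  have hdvh : dot v Hv = (1 / (n:ℝ)) * S := by
    subst hHv
    simp only [dot, hS, Finset.mul_sum]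
    rw [Finset.sum_comm]
    congr 1; ext i
    have hc : ∑ j, v j * (1 / (n:ℝ) * ((∑ k, x i k * v k) * x i j))
        = (1/(n:ℝ)) * ((∑ k, x i k * v k) * ∑ j, x i j * v j) := by
      rw [Finset.mul_sum, Finset.mul_sum]
      exact Finset.sum_congr rfl fun j _ => by ring
    rw [hc]; ring
  -- rewrite LHS
  have hLHS : (1 / (n : ℝ)) * ∑ i, sqnorm (fun j => v j - η * (dot (x i) v * x i j))
      = sqnorm v - 2*η*((1/(n:ℝ))*S) + η^2*((1/(n:ℝ))*T) := by
    have h1 : ∀ i : Fin n, sqnorm (fun j => v j - η * (dot (x i) v * x i j))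
        = sqnorm v - 2*η*(dot (x i) v)^2 + η^2*((dot (x i) v)^2*sqnorm (x i)) := by
      intro i
      rw [expand_aux η (dot (x i) v) v (x i)]
      have : (∑ j, x i j * v j) = dot (x i) v := rfl
      rw [this]; ring
    simp only [h1, Finset.sum_add_distrib, Finset.sum_sub_distrib, Finset.sum_const,
      Finset.card_univ, Fintype.card_fin, ← Finset.mul_sum, nsmul_eq_mul]
    field_simp
    ring
  rw [hLHS]
  -- T ≤ L d S
  have hTS : T ≤ L * d * S := by
    rw [hT, hS, Finset.mul_sum]
    apply Finset.sum_le_sum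
    intro i _
    have := hx i
    nlinarith [sq_nonneg (dot (x i) v)]
  have hS0 : 0 ≤ S := Finset.sum_nonneg fun i _ => sq_nonneg _
  have hv0 : 0 ≤ sqnorm v := Finset.sum_nonneg fun i _ => sq_nonneg _
  set B := (1/(n:ℝ)) * S with hB
  have hB0 : 0 ≤ B := by positivity
  have hlow' : (1 / L) * sqnorm v ≤ B := by rw [← hdvh]; exact hlow
  have hTB : (1/(n:ℝ)) * T ≤ L * d * B := by
    rw [hB]
    calc (1/(n:ℝ)) * T ≤ (1/(n:ℝ)) * (L * d * S) :=
          mul_le_mul_of_nonneg_left hTS (by positivity)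
      _ = L * d * ((1/(n:ℝ)) * S) := by ring
  have key : η^2 * ((1/(n:ℝ))*T) ≤ η * B := by
    have h1 : η * (L * d) ≤ 1 / (2 * L^2) := by
      have hden : (0:ℝ) < 2 * L^3 * d := by positivity
      rw [le_div_iff₀ (by positivity : (0:ℝ) < 2*L^2)]
      calc η * (L * d) * (2 * L^2) = η * (2 * L^3 * d) := by ring
        _ ≤ (1 / (2 * L^3 * d)) * (2 * L^3 * d) :=
            mul_le_mul_of_nonneg_right hη2 (le_of_lt hden)
        _ = 1 := by field_simp
    have h2 : η^2 * ((1/(n:ℝ))*T) ≤ η^2 * (L * d * B) :=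
      mul_le_mul_of_nonneg_left hTB (sq_nonneg η)
    have h3 : η^2 * (L * d * B) ≤ η * B := by
      have : η * (η * (L*d)) ≤ η * 1 := by
        apply mul_le_mul_of_nonneg_left _ hη
        calc η * (L*d) ≤ 1/(2*L^2) := h1
          _ ≤ 1 := by rw [div_le_one (by positivity)]; nlinarith
      nlinarith
    linarith
  -- final
  have hfin : η / (2*L) * sqnorm v ≤ η * B := by
    have : η / (2*L) * sqnorm v ≤ η * ((1/L) * sqnorm v) := by
      rw [div_mul_eq_mul_div, mul_div_assoc]
      apply mul_le_mul_of_nonneg_left _ hη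
      rw [div_le_iff₀ (by positivity : (0:ℝ) < 2*L)]
      have : (1/L) * sqnorm v * (2*L) = 2 * sqnorm v := by field_simp
      rw [this]; linarith
    calc η / (2*L) * sqnorm v ≤ η * ((1/L) * sqnorm v) := this
      _ ≤ η * B := mul_le_mul_of_nonneg_left hlow' hη
  nlinarith
end
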